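/- Debiasing weight lower bound (core of Lemma B.3 of 'Active Learning with Logged Data'): Let 𝒳 be a set, Q0 : 𝒳 → [0,1] a function, D ⊆ 𝒳 a nonempty subset, and let α ≥ 1 and n > 0 be reals with m = α·n. Define ξ = inf_{x ∈ D} Q0(x) and the debiasing query policy Q(x) = 1 if Q0(x) ≤ ξ + 1/α and Q(x) = 0 otherwise. Then for every x ∈ D, m·Q0(x) + n·Q(x) ≥ m·ξ + n; consequently, for every x ∈ D, 1/(m·Q0(x) + n·Q(x)) ≤ sup_{x' ∈ D} 1/(m·Q0(x') + n). -/
import Mathlib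


/-- **Debiasing weight lower bound** (core of Lemma B.3 of "Active Learning
with Logged Data"). For `Q0 : 𝒳 → [0,1]`, a nonempty `D ⊆ 𝒳`, reals `α ≥ 1`,
`n > 0`, `m = α·n`, `ξ = inf_{x ∈ D} Q0(x)` and the debiasing policy
`Q(x) = 1{Q0(x) ≤ ξ + 1/α}`, we have for every `x ∈ D`:
`m·Q0(x) + n·Q(x) ≥ m·ξ + n`, and consequently
`1/(m·Q0(x) + n·Q(x)) ≤ sup_{x' ∈ D} 1/(m·Q0(x') + n)`. -/
theorem debiasing_weight_lower_bound
    {𝒳 : Type*} (Q0 : 𝒳 → ℝ) (hQ0 : ∀ x, Q0 x ∈ Set.Icc (0 : ℝ) 1)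
    (D : Set 𝒳) (hD : D.Nonempty)
    (α n m : ℝ) (hα : 1 ≤ α) (hn : 0 < n) (hm : m = α * n)
    (ξ : ℝ) (hξ : ξ = ⨅ x : D, Q0 x)
    (Q : 𝒳 → ℝ) (hQ : ∀ x, Q x = if Q0 x ≤ ξ + 1 / α then (1 : ℝ) else 0) :
    (∀ x ∈ D, m * ξ + n ≤ m * Q0 x + n * Q x)
      ∧ (∀ x ∈ D, 1 / (m * Q0 x + n * Q x)
          ≤ ⨆ x' : D, 1 / (m * Q0 x' + n)) := by
  haveI := hD.to_subtype
  have hα0 : 0 < α := lt_of_lt_of_le one_pos hα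
  have hm0 : 0 < m := by rw [hm]; positivity
  have hξ0 : 0 ≤ ξ := by
    rw [hξ]; exact Real.iInf_nonneg fun x => (hQ0 x).1
  have hξle : ∀ x ∈ D, ξ ≤ Q0 x := by
    intro x hx
    rw [hξ]
    have hbb : BddBelow (Set.range fun y : D => Q0 (y : 𝒳)) :=
      ⟨0, by rintro _ ⟨y, rfl⟩; exact (hQ0 y).1⟩
    exact ciInf_le hbb ⟨x, hx⟩
  have h1α : m * (1 / α) = n := by rw [hm]; field_simp
  have part1 : ∀ x ∈ D, m * ξ + n ≤ m * Q0 x + n * Q x := by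
    intro x hx
    rw [hQ x]
    by_cases h : Q0 x ≤ ξ + 1 / α
    · rw [if_pos h]
      have := hξle x hx
      nlinarith
    · rw [if_neg h]
      push_neg at h
      nlinarith [mul_le_mul_of_nonneg_left h.le hm0.le]
  refine ⟨part1, ?_⟩
  intro x hx
  have hden : 0 < m * ξ + n := by nlinarith
  have hbdd : BddAbove (Set.range fun x' : D => 1 / (m * Q0 x' + n)) := by
    refine ⟨1 / n, ?_⟩
    rintro _ ⟨x', rfl⟩
    apply one_div_le_one_div_of_le hn
    nlinarith [(hQ0 x').1]
  have key : 1 / (m * ξ + n) ≤ ⨆ x' : D, 1 / (m * Q0 x' + n) := by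
    refine (le_csSup_iff hbdd (Set.range_nonempty _)).mpr ?_
    intro b hbub
    have hb : ∀ x' : D, 1 / (m * Q0 x' + n) ≤ b := fun x' =>
      hbub (Set.mem_range_self x')
    obtain ⟨x0⟩ : Nonempty D := inferInstance
    have hd0 : 0 < m * Q0 x0 + n := by nlinarith [(hQ0 (x0 : 𝒳)).1]
    have hb0 : 0 < b := lt_of_lt_of_le (by positivity) (hb x0)
    have hQx' : ∀ x' : D, 1 / b ≤ m * Q0 x' + n := by
      intro x'
      have hd : 0 < m * Q0 x' + n := by nlinarith [(hQ0 (x' : 𝒳)).1]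
      exact (one_div_le hd hb0).mp (hb x')
    have hξb : (1 / b - n) / m ≤ ξ := by
      rw [hξ]
      refine le_ciInf fun x' => ?_
      rw [div_le_iff₀ hm0]
      nlinarith [hQx' x']
    have : 1 / b ≤ m * ξ + n := by
      have := (div_le_iff₀ hm0).mp hξb
      nlinarith
    exact (one_div_le hden hb0).mpr this
  calc 1 / (m * Q0 x + n * Q x) ≤ 1 / (m * ξ + n) :=
        one_div_le_one_div_of_le hden (part1 x hx)
    _ ≤ _ := key
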